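/- Let γ be Euclidean gamma matrices with charge-conjugation matrix C, let λ_A (A in a 16-element index set) be the sixteen basis matrices with signs c_A ∈ {±1} defined by c_A = +1 for λ_A ∈ {1, γ5, iγ5γ_μ} and c_A = -1 for λ_A ∈ {γ_μ, iσ_{μν}} (so that (λ_A)ᵀ = c_A·C⁻¹λ_AC). Let ψ^a, ψ^b, ψ^c : Fin 4 → R be Grassmann-odd Majorana spinors over a ℂ-algebra R (all twelve components pairwise anticommute). Then for every Λ among the sixteen λ_A and every spinor index α: Σ_β Λ_{αβ}·ψ^a_β·(ψ̄^bΛψ^c) = -(1/4)·Σ_A c_A·Σ_β (λ_A)_{αβ}·ψ^c_β·(ψ̄^a(Λλ_AΛ)ψ^b). -/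

import Mathlib

open Matrix Complex BigOperators

noncomputable section

abbrev M4 : Type := Matrix (Fin 4) (Fin 4) ℂ

/-- Euclidean Clifford relation: γ_μγ_ν + γ_νγ_μ = 2δ_{μν}·1. -/
def CliffordRel (γ : Fin 4 → M4) : Prop :=
  ∀ μ ν, γ μ * γ ν + γ ν * γ μ = if μ = ν then (2 : ℂ) • (1 : M4) else 0

/-- γ5 := -(γ_0 γ_1 γ_2 γ_3). -/
def gamma5 (γ : Fin 4 → M4) : M4 := -(γ 0 * γ 1 * γ 2 * γ 3)

/-- σ_{μν} := (γ_μγ_ν - γ_νγ_μ)/2 = [γ_μ, γ_ν]/2. -/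
def sigmaMat (γ : Fin 4 → M4) (μ ν : Fin 4) : M4 :=
  (2⁻¹ : ℂ) • (γ μ * γ ν - γ ν * γ μ)

/-- Charge-conjugation matrix: invertible, Cᵀ = -C, C⁻¹γ_μC = -(γ_μ)ᵀ. -/
def ChargeConj (γ : Fin 4 → M4) (C : M4) : Prop :=
  IsUnit C.det ∧ Cᵀ = -C ∧ ∀ μ, C⁻¹ * γ μ * C = -(γ μ)ᵀ

/-- Majorana conjugate row vector: ξ̄_β := -Σ_α ξ_α·(C⁻¹)_{αβ}. -/
def MajBar {R : Type*} [Ring R] [Algebra ℂ R] (C : M4) (ξ : Fin 4 → R) (β : Fin 4) : R :=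
  -∑ α, (C⁻¹ α β) • ξ α

/-- Spinor bilinear: ξ̄Mχ := Σ_{β,γ'} ξ̄_β·M_{βγ'}·χ_{γ'} (complex entries act by scalar
multiplication). -/
def bilin {R : Type*} [Ring R] [Algebra ℂ R] (C : M4) (M : M4) (ξ χ : Fin 4 → R) : R :=
  ∑ β, ∑ g, M β g • (MajBar C ξ β * χ g)

/-- The sixteen basis matrices 1, γ5, γ_μ, iγ5γ_μ, iσ_{μν} (μ<ν). -/
def lambdaFam (γ : Fin 4 → M4) : Fin 16 → M4 :=
  ![1, gamma5 γ, γ 0, γ 1, γ 2, γ 3,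
    Complex.I • (gamma5 γ * γ 0), Complex.I • (gamma5 γ * γ 1),
    Complex.I • (gamma5 γ * γ 2), Complex.I • (gamma5 γ * γ 3),
    Complex.I • sigmaMat γ 0 1, Complex.I • sigmaMat γ 0 2,
    Complex.I • sigmaMat γ 0 3, Complex.I • sigmaMat γ 1 2,
    Complex.I • sigmaMat γ 1 3, Complex.I • sigmaMat γ 2 3]

/-- Signs c_A with (λ_A)ᵀ = c_A·C⁻¹λ_AC: +1 for 1, γ5, iγ5γ_μ; -1 for γ_μ, iσ_{μν}. -/
def cSign : Fin 16 → ℂ :=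
  ![1, 1, -1, -1, -1, -1, 1, 1, 1, 1, -1, -1, -1, -1, -1, -1]

section AuxFierz

variable {γ : Fin 4 → M4}

lemma hsq (hcl : CliffordRel γ) (μ : Fin 4) : γ μ * γ μ = 1 := by
  have h := hcl μ μ
  rw [if_pos rfl] at h
  have h2 : (2:ℂ) • (γ μ * γ μ) = (2:ℂ) • (1 : M4) := by
    rw [two_smul]; exact h
  exact smul_right_injective M4 (by norm_num) h2

lemma hac (hcl : CliffordRel γ) {μ ν : Fin 4} (h : μ ≠ ν) :
    γ μ * γ ν = -(γ ν * γ μ) := by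
  have h1 := hcl μ ν
  rw [if_neg h] at h1
  linear_combination (norm := abel) h1

lemma sigma_eq (hcl : CliffordRel γ) {μ ν : Fin 4} (h : μ ≠ ν) :
    sigmaMat γ μ ν = γ μ * γ ν := by
  rw [sigmaMat, hac hcl h, sub_eq_add_neg, ← two_smul ℂ, smul_smul]
  norm_num

/-- composition of sign-commutation -/
lemma comm_comp {g X Y : M4} {s t : ℂ} (hX : X * g = s • (g * X)) (hY : Y * g = t • (g * Y)) :
    (X * Y) * g = (s * t) • (g * (X * Y)) := by
  calc (X * Y) * g = X * (Y * g) := by rw [mul_assoc]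
    _ = t • ((X * g) * Y) := by rw [hY, mul_smul_comm, mul_assoc]
    _ = t • ((s • (g * X)) * Y) := by rw [hX]
    _ = (s * t) • (g * (X * Y)) := by
        rw [smul_mul_assoc, smul_smul, mul_comm t s, mul_assoc]

lemma comm_smul {g X : M4} {s c : ℂ} (hX : X * g = s • (g * X)) :
    (c • X) * g = s • (g * (c • X)) := by
  rw [smul_mul_assoc, hX, mul_smul_comm, smul_comm]

lemma comm_neg {g X : M4} {s : ℂ} (hX : X * g = s • (g * X)) :
    (-X) * g = s • (g * (-X)) := by
  rw [neg_mul, hX, mul_neg, smul_neg]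

lemma comm_one {g : M4} : (1 : M4) * g = (1 : ℂ) • (g * (1 : M4)) := by simp

lemma gcomm (hcl : CliffordRel γ) (μ τ : Fin 4) :
    γ μ * γ τ = ((if μ = τ then 1 else -1 : ℂ)) • (γ τ * γ μ) := by
  by_cases h : μ = τ
  · subst h; simp
  · rw [if_neg h, hac hcl h, neg_one_smul]

lemma g5comm (hcl : CliffordRel γ) (τ : Fin 4) :
    gamma5 γ * γ τ = (-1 : ℂ) • (γ τ * gamma5 γ) := by
  rw [gamma5]
  apply comm_neg
  have h01 := comm_comp (gcomm hcl 0 τ) (gcomm hcl 1 τ)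
  have h012 := comm_comp h01 (gcomm hcl 2 τ)
  have h := comm_comp h012 (gcomm hcl 3 τ)
  rw [show ((if (0:Fin 4) = τ then 1 else -1 : ℂ)) * (if (1:Fin 4) = τ then 1 else -1)
      * (if (2:Fin 4) = τ then 1 else -1) * (if (3:Fin 4) = τ then 1 else -1) = -1 by
    fin_cases τ <;> norm_num [Fin.ext_iff] <;> decide] at h
  exact h

def sgnZ : Fin 16 → Fin 4 → ℤ :=
  ![![1,1,1,1], ![-1,-1,-1,-1],
    ![1,-1,-1,-1], ![-1,1,-1,-1], ![-1,-1,1,-1], ![-1,-1,-1,1],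
    ![-1,1,1,1], ![1,-1,1,1], ![1,1,-1,1], ![1,1,1,-1],
    ![-1,-1,1,1], ![-1,1,-1,1], ![-1,1,1,-1], ![1,-1,-1,1], ![1,-1,1,-1], ![1,1,-1,-1]]

lemma commA0 (τ : Fin 4) : (1 : M4) * γ τ = ((sgnZ 0 τ : ℤ) : ℂ) • (γ τ * 1) := by
  have hz : sgnZ 0 τ = 1 := by revert τ; decide
  rw [hz]; simp

lemma commA1 (hcl : CliffordRel γ) (τ : Fin 4) :
    gamma5 γ * γ τ = ((sgnZ 1 τ : ℤ) : ℂ) • (γ τ * gamma5 γ) := by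
  have hz : sgnZ 1 τ = -1 := by revert τ; decide
  rw [hz]; push_cast; exact g5comm hcl τ

lemma commA2 (hcl : CliffordRel γ) (τ : Fin 4) :
    γ 0 * γ τ = ((sgnZ 2 τ : ℤ) : ℂ) • (γ τ * γ 0) := by
  have hz : sgnZ 2 τ = if (0 : Fin 4) = τ then 1 else -1 := by revert τ; decide
  rw [hz]; push_cast; exact gcomm hcl 0 τ

lemma commA3 (hcl : CliffordRel γ) (τ : Fin 4) :
    γ 1 * γ τ = ((sgnZ 3 τ : ℤ) : ℂ) • (γ τ * γ 1) := by
  have hz : sgnZ 3 τ = if (1 : Fin 4) = τ then 1 else -1 := by revert τ; decide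
  rw [hz]; push_cast; exact gcomm hcl 1 τ

lemma commA4 (hcl : CliffordRel γ) (τ : Fin 4) :
    γ 2 * γ τ = ((sgnZ 4 τ : ℤ) : ℂ) • (γ τ * γ 2) := by
  have hz : sgnZ 4 τ = if (2 : Fin 4) = τ then 1 else -1 := by revert τ; decide
  rw [hz]; push_cast; exact gcomm hcl 2 τ

lemma commA5 (hcl : CliffordRel γ) (τ : Fin 4) :
    γ 3 * γ τ = ((sgnZ 5 τ : ℤ) : ℂ) • (γ τ * γ 3) := by
  have hz : sgnZ 5 τ = if (3 : Fin 4) = τ then 1 else -1 := by revert τ; decide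
  rw [hz]; push_cast; exact gcomm hcl 3 τ

lemma commA6 (hcl : CliffordRel γ) (τ : Fin 4) :
    (Complex.I • (gamma5 γ * γ 0)) * γ τ
      = ((sgnZ 6 τ : ℤ) : ℂ) • (γ τ * (Complex.I • (gamma5 γ * γ 0))) := by
  have h := comm_smul (c := Complex.I) (comm_comp (g5comm hcl τ) (gcomm hcl 0 τ))
  rw [h]
  congr 1
  have hz : sgnZ 6 τ = -(if (0 : Fin 4) = τ then 1 else -1) := by clear h; revert τ; decide
  rw [hz]; push_cast; ring

lemma commA7 (hcl : CliffordRel γ) (τ : Fin 4) :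
    (Complex.I • (gamma5 γ * γ 1)) * γ τ
      = ((sgnZ 7 τ : ℤ) : ℂ) • (γ τ * (Complex.I • (gamma5 γ * γ 1))) := by
  have h := comm_smul (c := Complex.I) (comm_comp (g5comm hcl τ) (gcomm hcl 1 τ))
  rw [h]
  congr 1
  have hz : sgnZ 7 τ = -(if (1 : Fin 4) = τ then 1 else -1) := by clear h; revert τ; decide
  rw [hz]; push_cast; ring

lemma commA8 (hcl : CliffordRel γ) (τ : Fin 4) :
    (Complex.I • (gamma5 γ * γ 2)) * γ τ
      = ((sgnZ 8 τ : ℤ) : ℂ) • (γ τ * (Complex.I • (gamma5 γ * γ 2))) := by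
  have h := comm_smul (c := Complex.I) (comm_comp (g5comm hcl τ) (gcomm hcl 2 τ))
  rw [h]
  congr 1
  have hz : sgnZ 8 τ = -(if (2 : Fin 4) = τ then 1 else -1) := by clear h; revert τ; decide
  rw [hz]; push_cast; ring

lemma commA9 (hcl : CliffordRel γ) (τ : Fin 4) :
    (Complex.I • (gamma5 γ * γ 3)) * γ τ
      = ((sgnZ 9 τ : ℤ) : ℂ) • (γ τ * (Complex.I • (gamma5 γ * γ 3))) := by
  have h := comm_smul (c := Complex.I) (comm_comp (g5comm hcl τ) (gcomm hcl 3 τ))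
  rw [h]
  congr 1
  have hz : sgnZ 9 τ = -(if (3 : Fin 4) = τ then 1 else -1) := by clear h; revert τ; decide
  rw [hz]; push_cast; ring

lemma commA10 (hcl : CliffordRel γ) (τ : Fin 4) :
    (Complex.I • sigmaMat γ 0 1) * γ τ
      = ((sgnZ 10 τ : ℤ) : ℂ) • (γ τ * (Complex.I • sigmaMat γ 0 1)) := by
  rw [sigma_eq hcl (by decide)]
  have h := comm_smul (c := Complex.I) (comm_comp (gcomm hcl 0 τ) (gcomm hcl 1 τ))
  rw [h]
  congr 1
  have hz : sgnZ 10 τ = (if (0 : Fin 4) = τ then 1 else -1) * (if (1 : Fin 4) = τ then 1 else -1) := by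
    clear h; revert τ; decide
  rw [hz]; push_cast; ring

lemma commA11 (hcl : CliffordRel γ) (τ : Fin 4) :
    (Complex.I • sigmaMat γ 0 2) * γ τ
      = ((sgnZ 11 τ : ℤ) : ℂ) • (γ τ * (Complex.I • sigmaMat γ 0 2)) := by
  rw [sigma_eq hcl (by decide)]
  have h := comm_smul (c := Complex.I) (comm_comp (gcomm hcl 0 τ) (gcomm hcl 2 τ))
  rw [h]
  congr 1
  have hz : sgnZ 11 τ = (if (0 : Fin 4) = τ then 1 else -1) * (if (2 : Fin 4) = τ then 1 else -1) := by
    clear h; revert τ; decide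
  rw [hz]; push_cast; ring

lemma commA12 (hcl : CliffordRel γ) (τ : Fin 4) :
    (Complex.I • sigmaMat γ 0 3) * γ τ
      = ((sgnZ 12 τ : ℤ) : ℂ) • (γ τ * (Complex.I • sigmaMat γ 0 3)) := by
  rw [sigma_eq hcl (by decide)]
  have h := comm_smul (c := Complex.I) (comm_comp (gcomm hcl 0 τ) (gcomm hcl 3 τ))
  rw [h]
  congr 1
  have hz : sgnZ 12 τ = (if (0 : Fin 4) = τ then 1 else -1) * (if (3 : Fin 4) = τ then 1 else -1) := by
    clear h; revert τ; decide
  rw [hz]; push_cast; ring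

lemma commA13 (hcl : CliffordRel γ) (τ : Fin 4) :
    (Complex.I • sigmaMat γ 1 2) * γ τ
      = ((sgnZ 13 τ : ℤ) : ℂ) • (γ τ * (Complex.I • sigmaMat γ 1 2)) := by
  rw [sigma_eq hcl (by decide)]
  have h := comm_smul (c := Complex.I) (comm_comp (gcomm hcl 1 τ) (gcomm hcl 2 τ))
  rw [h]
  congr 1
  have hz : sgnZ 13 τ = (if (1 : Fin 4) = τ then 1 else -1) * (if (2 : Fin 4) = τ then 1 else -1) := by
    clear h; revert τ; decide
  rw [hz]; push_cast; ring

lemma commA14 (hcl : CliffordRel γ) (τ : Fin 4) :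
    (Complex.I • sigmaMat γ 1 3) * γ τ
      = ((sgnZ 14 τ : ℤ) : ℂ) • (γ τ * (Complex.I • sigmaMat γ 1 3)) := by
  rw [sigma_eq hcl (by decide)]
  have h := comm_smul (c := Complex.I) (comm_comp (gcomm hcl 1 τ) (gcomm hcl 3 τ))
  rw [h]
  congr 1
  have hz : sgnZ 14 τ = (if (1 : Fin 4) = τ then 1 else -1) * (if (3 : Fin 4) = τ then 1 else -1) := by
    clear h; revert τ; decide
  rw [hz]; push_cast; ring

lemma commA15 (hcl : CliffordRel γ) (τ : Fin 4) :
    (Complex.I • sigmaMat γ 2 3) * γ τ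
      = ((sgnZ 15 τ : ℤ) : ℂ) • (γ τ * (Complex.I • sigmaMat γ 2 3)) := by
  rw [sigma_eq hcl (by decide)]
  have h := comm_smul (c := Complex.I) (comm_comp (gcomm hcl 2 τ) (gcomm hcl 3 τ))
  rw [h]
  congr 1
  have hz : sgnZ 15 τ = (if (2 : Fin 4) = τ then 1 else -1) * (if (3 : Fin 4) = τ then 1 else -1) := by
    clear h; revert τ; decide
  rw [hz]; push_cast; ring

lemma comm_sgn (hcl : CliffordRel γ) (A : Fin 16) (τ : Fin 4) :
    lambdaFam γ A * γ τ = ((sgnZ A τ : ℤ) : ℂ) • (γ τ * lambdaFam γ A) := by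
  fin_cases A
  · exact commA0 τ
  · exact commA1 hcl τ
  · exact commA2 hcl τ
  · exact commA3 hcl τ
  · exact commA4 hcl τ
  · exact commA5 hcl τ
  · exact commA6 hcl τ
  · exact commA7 hcl τ
  · exact commA8 hcl τ
  · exact commA9 hcl τ
  · exact commA10 hcl τ
  · exact commA11 hcl τ
  · exact commA12 hcl τ
  · exact commA13 hcl τ
  · exact commA14 hcl τ
  · exact commA15 hcl τ

lemma gcomm_ne (hcl : CliffordRel γ) {μ ν : Fin 4} (h : μ ≠ ν) :
    γ μ * γ ν = (-1 : ℂ) • (γ ν * γ μ) := by rw [hac hcl h, neg_one_smul]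

lemma comm_symm {g X : M4} {s : ℂ} (hs : s * s = 1) (h : X * g = s • (g * X)) :
    g * X = s • (X * g) := by rw [h, smul_smul, hs, one_smul]

lemma sq_pair {X Y : M4} {s : ℂ} (h : Y * X = s • (X * Y)) (hX : X * X = 1) :
    (X * Y) * (X * Y) = s • (Y * Y) := by
  calc (X * Y) * (X * Y) = X * ((Y * X) * Y) := by rw [mul_assoc, mul_assoc]
    _ = s • ((X * X) * (Y * Y)) := by
        rw [h, smul_mul_assoc, mul_smul_comm, mul_assoc, mul_assoc]
    _ = s • (Y * Y) := by rw [hX, one_mul]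

lemma g5sq (hcl : CliffordRel γ) : gamma5 γ * gamma5 γ = 1 := by
  have c1 : (γ 2 * γ 3) * γ 1 = ((-1 : ℂ) * (-1)) • (γ 1 * (γ 2 * γ 3)) :=
    comm_comp (gcomm_ne hcl (by decide)) (gcomm_ne hcl (by decide))
  have c0pair : (γ 2 * γ 3) * γ 0 = ((-1 : ℂ) * (-1)) • (γ 0 * (γ 2 * γ 3)) :=
    comm_comp (gcomm_ne hcl (by decide)) (gcomm_ne hcl (by decide))
  have c0 : (γ 1 * (γ 2 * γ 3)) * γ 0 = ((-1 : ℂ) * ((-1) * (-1))) • (γ 0 * (γ 1 * (γ 2 * γ 3))) :=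
    comm_comp (gcomm_ne hcl (by decide)) c0pair
  have e23 : (γ 2 * γ 3) * (γ 2 * γ 3) = (-1 : ℂ) • (γ 3 * γ 3) :=
    sq_pair (gcomm_ne hcl (by decide)) (hsq hcl 2)
  have e123 := sq_pair c1 (hsq hcl 1)
  have e0123 := sq_pair c0 (hsq hcl 0)
  have hg5 : gamma5 γ = -(γ 0 * (γ 1 * (γ 2 * γ 3))) := by rw [gamma5, mul_assoc, mul_assoc]
  rw [hg5, neg_mul_neg, e0123, e123, e23, hsq hcl 3, smul_smul, smul_smul]
  norm_num

lemma g5gsq (hcl : CliffordRel γ) (μ : Fin 4) :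
    (gamma5 γ * γ μ) * (gamma5 γ * γ μ) = (-1 : ℂ) • (1 : M4) := by
  have h : γ μ * gamma5 γ = (-1 : ℂ) • (gamma5 γ * γ μ) :=
    comm_symm (by norm_num) (g5comm hcl μ)
  rw [sq_pair h (g5sq hcl), hsq hcl μ]

lemma sqA1 (hcl : CliffordRel γ) : lambdaFam γ 1 * lambdaFam γ 1 = 1 := g5sq hcl

lemma sq_smul_helper {X : M4} (h : X * X = (-1 : ℂ) • (1 : M4)) :
    (Complex.I • X) * (Complex.I • X) = 1 := by
  rw [smul_mul_smul_comm, h, smul_smul, Complex.I_mul_I]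
  norm_num

lemma sq_gg (hcl : CliffordRel γ) {μ ν : Fin 4} (h : μ ≠ ν) :
    (γ μ * γ ν) * (γ μ * γ ν) = (-1 : ℂ) • (1 : M4) := by
  rw [sq_pair (gcomm_ne hcl h.symm) (hsq hcl μ), hsq hcl ν]

lemma lambda_sq (hcl : CliffordRel γ) (A : Fin 16) : lambdaFam γ A * lambdaFam γ A = 1 := by
  fin_cases A
  · exact one_mul 1
  · exact g5sq hcl
  · exact hsq hcl 0
  · exact hsq hcl 1
  · exact hsq hcl 2
  · exact hsq hcl 3
  · exact sq_smul_helper (g5gsq hcl 0)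
  · exact sq_smul_helper (g5gsq hcl 1)
  · exact sq_smul_helper (g5gsq hcl 2)
  · exact sq_smul_helper (g5gsq hcl 3)
  all_goals exact sq_smul_helper (by rw [sigma_eq hcl (by decide)]; exact sq_gg hcl (by decide))

lemma trace_zero_of_anti (hcl : CliffordRel γ) {X : M4} (τ : Fin 4)
    (h : X * γ τ = (-1 : ℂ) • (γ τ * X)) : X.trace = 0 := by
  have h1 : X = (-1 : ℂ) • ((γ τ * X) * γ τ) := by
    conv_lhs => rw [← mul_one X, ← hsq hcl τ, ← mul_assoc, h]
    rw [smul_mul_assoc]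
  have h2 : X.trace = (-1 : ℂ) • ((γ τ * X) * γ τ).trace := by rw [← Matrix.trace_smul, ← h1]
  rw [Matrix.trace_mul_comm, ← mul_assoc, hsq hcl τ, one_mul] at h2
  have : (2 : ℂ) * X.trace = 0 := by
    rw [two_mul]
    nth_rewrite 1 [h2]
    simp
  have h4 : (2:ℂ) ≠ 0 := by norm_num
  exact (mul_eq_zero.mp this).resolve_left h4

lemma sgn_pair_neg : ∀ A B : Fin 16, A ≠ B → ∃ τ, sgnZ A τ * sgnZ B τ = -1 := by decide

lemma trace_orth (hcl : CliffordRel γ) (A B : Fin 16) :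
    (lambdaFam γ A * lambdaFam γ B).trace = if A = B then 4 else 0 := by
  by_cases h : A = B
  · subst h
    rw [lambda_sq hcl, if_pos rfl, Matrix.trace_one]
    norm_num
  · rw [if_neg h]
    obtain ⟨τ, hτ⟩ := sgn_pair_neg A B h
    apply trace_zero_of_anti hcl τ
    have hc := comm_comp (comm_sgn hcl A τ) (comm_sgn hcl B τ)
    rw [hc]
    congr 1
    rw [← Int.cast_mul, hτ]
    norm_num

lemma trace_lambda_sum (hcl : CliffordRel γ) (g : Fin 16 → ℂ) (B : Fin 16) :
    (lambdaFam γ B * ∑ A, g A • lambdaFam γ A).trace = 4 * g B := by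
  rw [Finset.mul_sum]
  have : ∀ A, lambdaFam γ B * (g A • lambdaFam γ A) = g A • (lambdaFam γ B * lambdaFam γ A) := by
    intro A; rw [mul_smul_comm]
  simp_rw [this, Matrix.trace_sum, Matrix.trace_smul, trace_orth hcl, smul_eq_mul]
  simp [mul_comm]

lemma lambda_li (hcl : CliffordRel γ) : LinearIndependent ℂ (lambdaFam γ) := by
  rw [Fintype.linearIndependent_iff]
  intro g hg B
  have := trace_lambda_sum hcl g B
  rw [hg, mul_zero, Matrix.trace_zero] at this
  have h4 : (4:ℂ) ≠ 0 := by norm_num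
  exact (mul_eq_zero.mp this.symm).resolve_left h4

lemma lambda_card : Fintype.card (Fin 16) = Module.finrank ℂ M4 := by
  simp [Module.finrank_matrix]

lemma completeness (hcl : CliffordRel γ) (X : M4) :
    ∑ A, (lambdaFam γ A * X).trace • lambdaFam γ A = (4 : ℂ) • X := by
  set b := basisOfLinearIndependentOfCardEqFinrank (lambda_li hcl) lambda_card with hbdef
  have hb : ⇑b = lambdaFam γ := coe_basisOfLinearIndependentOfCardEqFinrank _ _
  have hX : X = ∑ A, b.repr X A • lambdaFam γ A := by
    conv_lhs => rw [← b.sum_repr X]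
    rw [hb]
  have htr : ∀ A, (lambdaFam γ A * X).trace = 4 * b.repr X A := by
    intro A
    conv_lhs => rw [hX]
    exact trace_lambda_sum hcl _ A
  calc ∑ A, (lambdaFam γ A * X).trace • lambdaFam γ A
      = ∑ A, (4 : ℂ) • (b.repr X A • lambdaFam γ A) := by
        apply Finset.sum_congr rfl
        intro A _
        rw [htr A, mul_smul]
    _ = (4 : ℂ) • X := by rw [← Finset.smul_sum, ← hX]

lemma trace_mul_std (M : M4) (i j : Fin 4) :
    (M * Matrix.single i j (1:ℂ)).trace = M j i := by
  simp [Matrix.trace, Matrix.diag, Matrix.mul_apply, Matrix.single_apply, mul_ite, ite_and,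
    Finset.sum_ite_eq, Finset.sum_ite_eq']

lemma compl_entry (hcl : CliffordRel γ) (α d q p : Fin 4) :
    ∑ A, (lambdaFam γ A) α d * (lambdaFam γ A) q p
      = if q = d ∧ p = α then 4 else 0 := by
  have h := completeness hcl (Matrix.single d α (1:ℂ))
  have h2 := congrFun (congrFun (congrArg (fun M => M) h) q) p
  simp only [Matrix.sum_apply, Matrix.smul_apply, smul_eq_mul] at h2
  have h3 : ∀ A : Fin 16, (lambdaFam γ A * Matrix.single d α (1:ℂ)).trace = (lambdaFam γ A) α d :=
    fun A => trace_mul_std _ _ _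
  rw [Finset.sum_congr rfl (fun A _ => by rw [h3 A])] at h2
  rw [h2]
  by_cases h4 : q = d <;> by_cases h5 : p = α <;>
    simp_all [Matrix.single_apply, eq_comm]

variable {C : M4}

lemma hCC (hC : ChargeConj γ C) : C * C⁻¹ = 1 := Matrix.mul_nonsing_inv C hC.1
lemma hC'C (hC : ChargeConj γ C) : C⁻¹ * C = 1 := Matrix.nonsing_inv_mul C hC.1

lemma hCinvT (hC : ChargeConj γ C) : (C⁻¹)ᵀ = -C⁻¹ := by
  rw [Matrix.transpose_nonsing_inv, hC.2.1]
  apply Matrix.inv_eq_right_inv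
  rw [neg_mul_neg, hCC hC]

lemma tpg (hC : ChargeConj γ C) (μ : Fin 4) :
    (γ μ)ᵀ = (-1 : ℂ) • (C⁻¹ * γ μ * C) := by
  rw [neg_one_smul, hC.2.2 μ, neg_neg]

lemma tp_pair {X Y : M4} {sX sY s : ℂ} (hC : ChargeConj γ C)
    (hX : Xᵀ = sX • (C⁻¹ * X * C)) (hY : Yᵀ = sY • (C⁻¹ * Y * C))
    (hswap : Y * X = s • (X * Y)) :
    (X * Y)ᵀ = (sX * sY * s) • (C⁻¹ * (X * Y) * C) := by
  rw [Matrix.transpose_mul, hX, hY, smul_mul_assoc, mul_smul_comm, smul_smul]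
  have h1 : (C⁻¹ * Y * C) * (C⁻¹ * X * C) = C⁻¹ * (Y * X) * C := by
    have h0 : C * (C⁻¹ * X * C) = X * C := by
      rw [← mul_assoc, ← mul_assoc, hCC hC, one_mul]
    calc (C⁻¹ * Y * C) * (C⁻¹ * X * C) = C⁻¹ * Y * (C * (C⁻¹ * X * C)) := by rw [mul_assoc]
      _ = C⁻¹ * Y * (X * C) := by rw [h0]
      _ = C⁻¹ * (Y * X) * C := by rw [← mul_assoc, mul_assoc C⁻¹ Y X]
  rw [h1, hswap, mul_smul_comm, smul_mul_assoc, smul_smul]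
  ring_nf

lemma tp_smul {X : M4} {s : ℂ} (c : ℂ) (hX : Xᵀ = s • (C⁻¹ * X * C)) :
    (c • X)ᵀ = s • (C⁻¹ * (c • X) * C) := by
  rw [Matrix.transpose_smul, hX, mul_smul_comm, smul_mul_assoc, smul_comm]

lemma tpg5 (hcl : CliffordRel γ) (hC : ChargeConj γ C) :
    (gamma5 γ)ᵀ = (1 : ℂ) • (C⁻¹ * gamma5 γ * C) := by
  have t2 := tp_pair hC (tpg hC 0) (tpg hC 1) (gcomm_ne hcl (show (1:Fin 4) ≠ 0 by decide))
  have s2 := comm_comp (gcomm_ne hcl (show (0:Fin 4) ≠ 2 by decide))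
    (gcomm_ne hcl (show (1:Fin 4) ≠ 2 by decide))
  have t3 := tp_pair hC t2 (tpg hC 2) (comm_symm (by norm_num) s2)
  have s23 := comm_comp (gcomm_ne hcl (show (0:Fin 4) ≠ 3 by decide))
    (gcomm_ne hcl (show (1:Fin 4) ≠ 3 by decide))
  have s3 := comm_comp s23 (gcomm_ne hcl (show (2:Fin 4) ≠ 3 by decide))
  have t4 := tp_pair hC t3 (tpg hC 3) (comm_symm (by norm_num) s3)
  have t4' : (γ 0 * γ 1 * γ 2 * γ 3)ᵀ = (1 : ℂ) • (C⁻¹ * (γ 0 * γ 1 * γ 2 * γ 3) * C) := by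
    rw [t4]; norm_num
  rw [gamma5, Matrix.transpose_neg, t4']
  simp [mul_neg, neg_mul]

lemma tpg5g (hcl : CliffordRel γ) (hC : ChargeConj γ C) (μ : Fin 4) :
    (gamma5 γ * γ μ)ᵀ = (1 : ℂ) • (C⁻¹ * (gamma5 γ * γ μ) * C) := by
  have h := tp_pair hC (tpg5 hcl hC) (tpg hC μ) (comm_symm (by norm_num) (g5comm hcl μ))
  rw [h]; norm_num

lemma tpgg (hcl : CliffordRel γ) (hC : ChargeConj γ C) {μ ν : Fin 4} (h : μ ≠ ν) :
    (γ μ * γ ν)ᵀ = (-1 : ℂ) • (C⁻¹ * (γ μ * γ ν) * C) := by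
  have h2 := tp_pair hC (tpg hC μ) (tpg hC ν) (gcomm_ne hcl h.symm)
  rw [h2]; norm_num

lemma transp (hcl : CliffordRel γ) (hC : ChargeConj γ C) (A : Fin 16) :
    (lambdaFam γ A)ᵀ = cSign A • (C⁻¹ * lambdaFam γ A * C) := by
  fin_cases A
  · show (1 : M4)ᵀ = (1 : ℂ) • (C⁻¹ * 1 * C)
    rw [Matrix.transpose_one, mul_one, hC'C hC, one_smul]
  · exact tpg5 hcl hC
  · exact tpg hC 0
  · exact tpg hC 1
  · exact tpg hC 2
  · exact tpg hC 3
  · exact tp_smul _ (tpg5g hcl hC 0)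
  · exact tp_smul _ (tpg5g hcl hC 1)
  · exact tp_smul _ (tpg5g hcl hC 2)
  · exact tp_smul _ (tpg5g hcl hC 3)
  all_goals exact tp_smul _ (by rw [sigma_eq hcl (by decide)]; exact tpgg hcl hC (by decide))

lemma cSign_vals (A : Fin 16) : cSign A = 1 ∨ cSign A = -1 := by
  fin_cases A <;> first | exact Or.inl rfl | exact Or.inr rfl

lemma key1 (hcl : CliffordRel γ) (hC : ChargeConj γ C) (A A₀ : Fin 16) :
    cSign A • (C⁻¹ * (lambdaFam γ A₀ * lambdaFam γ A * lambdaFam γ A₀))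
      = (C⁻¹ * lambdaFam γ A₀ * C) * ((lambdaFam γ A)ᵀ * (C⁻¹ * lambdaFam γ A₀)) := by
  set Λ := lambdaFam γ A₀
  set lA := lambdaFam γ A
  rw [transp hcl hC A]
  rw [smul_mul_assoc, mul_smul_comm]
  congr 1
  symm
  calc (C⁻¹ * Λ * C) * ((C⁻¹ * lA * C) * (C⁻¹ * Λ))
      = C⁻¹ * (Λ * ((C * C⁻¹) * (lA * ((C * C⁻¹) * Λ)))) := by
        simp only [mul_assoc]
    _ = C⁻¹ * (Λ * (lA * Λ)) := by rw [hCC hC]; simp only [one_mul]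
    _ = C⁻¹ * (Λ * lA * Λ) := by simp only [mul_assoc]

lemma key2 (hcl : CliffordRel γ) (hC : ChargeConj γ C) (A₀ : Fin 16) :
    (C⁻¹ * lambdaFam γ A₀ * C)ᵀ = cSign A₀ • lambdaFam γ A₀ := by
  set Λ := lambdaFam γ A₀ with hΛ
  rw [Matrix.transpose_mul, Matrix.transpose_mul, hCinvT hC, hC.2.1, transp hcl hC A₀, ← hΛ]
  simp only [smul_mul_assoc, mul_smul_comm, mul_neg, neg_mul, neg_neg, smul_neg, neg_smul]
  congr 1
  calc C * (C⁻¹ * Λ * C * C⁻¹) = (C * C⁻¹) * (Λ * (C * C⁻¹)) := by simp only [mul_assoc]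
    _ = Λ := by rw [hCC hC, one_mul, mul_one]

lemma key3 (hcl : CliffordRel γ) (hC : ChargeConj γ C) (A₀ : Fin 16) :
    (C⁻¹ * lambdaFam γ A₀)ᵀ = (-(cSign A₀)) • (C⁻¹ * lambdaFam γ A₀) := by
  set Λ := lambdaFam γ A₀ with hΛ
  rw [Matrix.transpose_mul, hCinvT hC, transp hcl hC A₀, ← hΛ]
  simp only [smul_mul_assoc, mul_smul_comm, mul_neg, neg_mul, neg_neg, smul_neg, neg_smul]
  rw [show C⁻¹ * Λ * C * C⁻¹ = C⁻¹ * Λ from by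
    calc C⁻¹ * Λ * C * C⁻¹ = C⁻¹ * (Λ * (C * C⁻¹)) := by simp only [mul_assoc]
      _ = C⁻¹ * Λ := by rw [hCC hC, mul_one]]

lemma matrixIdent (hcl : CliffordRel γ) (hC : ChargeConj γ C) (A₀ : Fin 16) (α β e d : Fin 4) :
    (4⁻¹ : ℂ) * ∑ A, cSign A * (lambdaFam γ A α d *
        (C⁻¹ * (lambdaFam γ A₀ * lambdaFam γ A * lambdaFam γ A₀)) β e)
      = -(lambdaFam γ A₀ α β * (C⁻¹ * lambdaFam γ A₀) e d) := by
  set Λ := lambdaFam γ A₀ with hΛ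
  set X := C⁻¹ * Λ * C with hX
  set Y := C⁻¹ * Λ with hY
  have hstep : ∀ A : Fin 16, cSign A * (C⁻¹ * (Λ * lambdaFam γ A * Λ)) β e
      = ∑ p, X β p * ∑ q, lambdaFam γ A q p * Y q e := by
    intro A
    have h := congrFun (congrFun (key1 hcl hC A A₀) β) e
    rw [Matrix.smul_apply, smul_eq_mul, ← hΛ, ← hY, ← hX] at h
    rw [h]
    simp_rw [Matrix.mul_apply, Matrix.transpose_apply]
  calc (4⁻¹:ℂ) * ∑ A, cSign A * (lambdaFam γ A α d * (C⁻¹ * (Λ * lambdaFam γ A * Λ)) β e)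
      = (4⁻¹:ℂ) * ∑ A, lambdaFam γ A α d * ∑ p, X β p * ∑ q, lambdaFam γ A q p * Y q e := by
        congr 1
        apply Finset.sum_congr rfl
        intro A _
        rw [← hstep A]
        ring
    _ = (4⁻¹:ℂ) * ∑ p, ∑ q, (X β p * Y q e) * ∑ A, lambdaFam γ A α d * lambdaFam γ A q p := by
        congr 1
        simp_rw [Finset.mul_sum]
        rw [Finset.sum_comm]
        apply Finset.sum_congr rfl
        intro p _
        rw [Finset.sum_comm]
        apply Finset.sum_congr rfl
        intro q _
        apply Finset.sum_congr rfl
        intro A _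
        ring
    _ = (4⁻¹:ℂ) * ((X β α * Y d e) * 4) := by
        congr 1
        simp_rw [compl_entry hcl α d]
        simp [mul_ite, ite_and, Finset.sum_ite_eq, Finset.sum_ite_eq']
    _ = -(Λ α β * Y e d) := by
        have hx := congrFun (congrFun (key2 hcl hC A₀) α) β
        rw [Matrix.transpose_apply, Matrix.smul_apply, smul_eq_mul, ← hΛ, ← hX] at hx
        have hy := congrFun (congrFun (key3 hcl hC A₀) e) d
        rw [Matrix.transpose_apply, Matrix.smul_apply, smul_eq_mul, ← hΛ, ← hY] at hy
        rw [hx, hy]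
        rcases cSign_vals A₀ with h|h <;> rw [h] <;> ring

lemma bilin_expand {R : Type*} [Ring R] [Algebra ℂ R] (C M : M4) (ξ χ : Fin 4 → R) :
    bilin C M ξ χ = -∑ e, ∑ d, (C⁻¹ * M) e d • (ξ e * χ d) := by
  rw [bilin]
  simp only [MajBar, neg_mul, Finset.sum_mul, smul_mul_assoc, smul_neg, Finset.smul_sum,
    smul_smul, mul_neg, Finset.sum_neg_distrib, Matrix.mul_apply, Finset.sum_smul, neg_inj]
  rw [Finset.sum_comm]
  have h1 : ∀ (g : Fin 4), ∑ b, ∑ a, (M b g * C⁻¹ a b) • (ξ a * χ g)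
      = ∑ a, ∑ b, (C⁻¹ a b * M b g) • (ξ a * χ g) := by
    intro g
    rw [Finset.sum_comm]
    exact Finset.sum_congr rfl fun a _ => Finset.sum_congr rfl fun b _ => by rw [mul_comm]
  simp_rw [h1]
  rw [Finset.sum_comm]


end AuxFierz

theorem statement10 {R : Type*} [Ring R] [Algebra ℂ R]
    (γ : Fin 4 → M4) (C : M4) (hcl : CliffordRel γ) (hC : ChargeConj γ C)
    (ψ : Fin 3 → Fin 4 → R)
    (hodd : ∀ a b α β, ψ a α * ψ b β = -(ψ b β * ψ a α)) :
    ∀ A₀ : Fin 16, ∀ α,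
      ∑ β, lambdaFam γ A₀ α β • (ψ 0 β * bilin C (lambdaFam γ A₀) (ψ 1) (ψ 2))
      = -(4⁻¹ : ℂ) • ∑ A, cSign A •
          ∑ β, lambdaFam γ A α β •
            (ψ 2 β *
              bilin C (lambdaFam γ A₀ * lambdaFam γ A * lambdaFam γ A₀) (ψ 0) (ψ 1)) := by
  intro A₀ α
  set Λ := lambdaFam γ A₀ with hΛ
  have hre : ∀ (x y z : Fin 4), ψ 2 z * (ψ 0 x * ψ 1 y) = ψ 0 x * (ψ 1 y * ψ 2 z) := by
    intro x y z
    rw [← mul_assoc, hodd 2 0 z x, neg_mul, mul_assoc, hodd 2 1 z y, mul_neg, neg_neg]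
  have stepL : ∑ β, Λ α β • (ψ 0 β * bilin C Λ (ψ 1) (ψ 2))
      = ∑ x, ∑ y, ∑ z, (-(Λ α x * (C⁻¹ * Λ) y z)) • (ψ 0 x * (ψ 1 y * ψ 2 z)) := by
    simp only [bilin_expand, mul_neg, Finset.mul_sum, mul_smul_comm, smul_neg,
      Finset.smul_sum, smul_smul, neg_smul, Finset.sum_neg_distrib]
  have r1 : ∀ (F : Fin 16 → Fin 4 → Fin 4 → Fin 4 → R),
      ∑ A, ∑ z, ∑ x, ∑ y, F A z x y = ∑ x, ∑ y, ∑ z, ∑ A, F A z x y := by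
    intro F
    calc ∑ A, ∑ z, ∑ x, ∑ y, F A z x y
        = ∑ z, ∑ A, ∑ x, ∑ y, F A z x y := Finset.sum_comm
      _ = ∑ z, ∑ x, ∑ A, ∑ y, F A z x y :=
          Finset.sum_congr rfl fun z _ => Finset.sum_comm
      _ = ∑ z, ∑ x, ∑ y, ∑ A, F A z x y :=
          Finset.sum_congr rfl fun z _ => Finset.sum_congr rfl fun x _ => Finset.sum_comm
      _ = ∑ x, ∑ z, ∑ y, ∑ A, F A z x y := Finset.sum_comm
      _ = ∑ x, ∑ y, ∑ z, ∑ A, F A z x y :=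
          Finset.sum_congr rfl fun x _ => Finset.sum_comm
  have hR : -(4⁻¹ : ℂ) • ∑ A, cSign A •
        ∑ z, lambdaFam γ A α z • (ψ 2 z * bilin C (Λ * lambdaFam γ A * Λ) (ψ 0) (ψ 1))
      = ∑ x, ∑ y, ∑ z, ((4⁻¹:ℂ) * ∑ A, cSign A *
          (lambdaFam γ A α z * (C⁻¹ * (Λ * lambdaFam γ A * Λ)) x y)) •
            (ψ 0 x * (ψ 1 y * ψ 2 z)) := by
    calc -(4⁻¹ : ℂ) • ∑ A, cSign A •
          ∑ z, lambdaFam γ A α z • (ψ 2 z * bilin C (Λ * lambdaFam γ A * Λ) (ψ 0) (ψ 1))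
        = -∑ A, ∑ z, ∑ x, ∑ y,
            ((-4⁻¹ : ℂ) * (cSign A * (lambdaFam γ A α z *
              (C⁻¹ * (Λ * lambdaFam γ A * Λ)) x y))) • (ψ 0 x * (ψ 1 y * ψ 2 z)) := by
          simp only [bilin_expand, mul_neg, Finset.mul_sum, mul_smul_comm, smul_neg,
            Finset.smul_sum, smul_smul, neg_smul, Finset.sum_neg_distrib, neg_neg, hre,
            Finset.sum_smul]
      _ = ∑ A, ∑ z, ∑ x, ∑ y,
            ((4⁻¹ : ℂ) * (cSign A * (lambdaFam γ A α z *
              (C⁻¹ * (Λ * lambdaFam γ A * Λ)) x y))) • (ψ 0 x * (ψ 1 y * ψ 2 z)) := by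
          simp only [← Finset.sum_neg_distrib, ← neg_smul]
          apply Finset.sum_congr rfl; intro A _
          apply Finset.sum_congr rfl; intro z _
          apply Finset.sum_congr rfl; intro x _
          apply Finset.sum_congr rfl; intro y _
          congr 1
          ring
      _ = ∑ x, ∑ y, ∑ z, ∑ A,
            ((4⁻¹ : ℂ) * (cSign A * (lambdaFam γ A α z *
              (C⁻¹ * (Λ * lambdaFam γ A * Λ)) x y))) • (ψ 0 x * (ψ 1 y * ψ 2 z)) :=
          r1 _
      _ = ∑ x, ∑ y, ∑ z, ((4⁻¹:ℂ) * ∑ A, cSign A *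
            (lambdaFam γ A α z * (C⁻¹ * (Λ * lambdaFam γ A * Λ)) x y)) •
              (ψ 0 x * (ψ 1 y * ψ 2 z)) := by
          apply Finset.sum_congr rfl; intro x _
          apply Finset.sum_congr rfl; intro y _
          apply Finset.sum_congr rfl; intro z _
          rw [Finset.mul_sum, Finset.sum_smul]
  rw [stepL, hR]
  apply Finset.sum_congr rfl; intro x _
  apply Finset.sum_congr rfl; intro y _
  apply Finset.sum_congr rfl; intro z _
  congr 1
  exact (matrixIdent hcl hC A₀ α x y z).symm
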